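/- Suppose that f is a holomorphic self-map of the open unit disc D, b ∈ D, and h is the conformal automorphism of D defined as follows: if f(b) ≠ b, then h is the hyperbolic automorphism of D whose axis is the hyperbolic line through b and f(b) and which satisfies h(f(b)) = b; if f(b) = b, then h is the identity. Then for every u in D, ρ(f(u), h(f(u))) ≤ exp(ρ(u,b)) · ρ(f(b), b). -/

import Mathlib

open Complex Metric Set

/-- The hyperbolic metric on the open unit disc:
`ρ(u,v) = 2 · arsinh (|u − v| / √((1 − |u|²)(1 − |v|²)))`. -/
noncomputable def rho (u v : ℂ) : ℝ :=
  2 * Real.arsinh (‖u - v‖ /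
    Real.sqrt ((1 - ‖u‖ ^ 2) * (1 - ‖v‖ ^ 2)))

namespace DispAux

/-- half-displacement quantity: `sinh (ρ(u,v)/2)` -/
noncomputable def sh (u v : ℂ) : ℝ :=
  ‖u - v‖ / Real.sqrt ((1 - ‖u‖ ^ 2) * (1 - ‖v‖ ^ 2))

lemma rho_eq (u v : ℂ) : rho u v = 2 * Real.arsinh (sh u v) := rfl

lemma sh_nonneg (u v : ℂ) : 0 ≤ sh u v :=
  div_nonneg (norm_nonneg _) (Real.sqrt_nonneg _)

lemma rho_nonneg (u v : ℂ) : 0 ≤ rho u v := by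
  rw [rho_eq]
  have h := Real.arsinh_nonneg_iff.2 (sh_nonneg u v)
  linarith

/-- the fundamental normSq identity -/
lemma normSq_identity (a w : ℂ) :
    normSq (1 - (starRingEnd ℂ) a * w) - normSq (w - a) = (1 - normSq a) * (1 - normSq w) := by
  simp [normSq_apply, mul_re, mul_im, sub_re, sub_im]
  ring

/-- Möbius map sending `a` to `0`. -/
noncomputable def mob (a w : ℂ) : ℂ := (w - a) / (1 - (starRingEnd ℂ) a * w)

lemma mob_denom_ne (a w : ℂ) (ha : ‖a‖ < 1) (hw : ‖w‖ < 1) :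
    1 - (starRingEnd ℂ) a * w ≠ 0 := by
  intro hcon
  have h1 : ‖(starRingEnd ℂ) a * w‖ < 1 := by
    rw [norm_mul, Complex.norm_conj]
    calc ‖a‖ * ‖w‖ ≤ ‖a‖ * 1 :=
          mul_le_mul_of_nonneg_left hw.le (norm_nonneg a)
    _ = ‖a‖ := mul_one _
    _ < 1 := ha
  have : ((starRingEnd ℂ) a * w) = 1 := by linear_combination -hcon
  rw [this] at h1; simp at h1

lemma abs_lt_abs_of_normSq_lt {x y : ℂ} (h : normSq x < normSq y) :
    ‖x‖ < ‖y‖ := by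
  have := Real.sqrt_lt_sqrt (normSq_nonneg x) h
  simpa [Complex.norm_def] using this

lemma mob_mem (a w : ℂ) (ha : ‖a‖ < 1) (hw : ‖w‖ < 1) :
    ‖mob a w‖ < 1 := by
  have hd := mob_denom_ne a w ha hw
  have hdpos : 0 < ‖1 - (starRingEnd ℂ) a * w‖ := by
    simpa [norm_pos_iff] using hd
  rw [mob, norm_div, div_lt_one hdpos]
  apply abs_lt_abs_of_normSq_lt
  have hid := normSq_identity a w
  have h1 : normSq a < 1 := by
    have := Complex.sq_norm a; nlinarith [norm_nonneg a]
  have h2 : normSq w < 1 := by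
    have := Complex.sq_norm w; nlinarith [norm_nonneg w]
  nlinarith

lemma mob_self (a : ℂ) : mob a a = 0 := by simp [mob]

lemma mob_inv (a w : ℂ) (ha : ‖a‖ < 1) (hw : ‖w‖ < 1) :
    mob (-a) (mob a w) = w := by
  have hd := mob_denom_ne a w ha hw
  have hna : normSq a < 1 := by
    have := Complex.sq_norm a; nlinarith [norm_nonneg a]
  have h2 : (1 : ℂ) - (starRingEnd ℂ) a * a ≠ 0 := by
    intro hcon
    have hm : (starRingEnd ℂ) a * a = (normSq a : ℂ) := by
      rw [mul_comm, Complex.mul_conj]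
    rw [hm] at hcon
    have : (1 : ℝ) - normSq a = 0 := by
      have := congrArg Complex.re hcon; simpa using this
    linarith
  have e1 : (w - a) / (1 - (starRingEnd ℂ) a * w) + a
      = (w * (1 - (starRingEnd ℂ) a * a)) / (1 - (starRingEnd ℂ) a * w) := by
    rw [div_add' _ _ _ hd]; congr 1; ring
  have e2 : 1 + (starRingEnd ℂ) a * ((w - a) / (1 - (starRingEnd ℂ) a * w))
      = (1 - (starRingEnd ℂ) a * a) / (1 - (starRingEnd ℂ) a * w) := by
    field_simp; ring
  rw [mob, mob, map_neg, sub_neg_eq_add, neg_mul, sub_neg_eq_add, e1, e2,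
    div_div_div_cancel_right₀]
  · exact mul_div_cancel_right₀ w h2
  · exact hd


lemma mob_differentiableOn (a : ℂ) (ha : ‖a‖ < 1) :
    DifferentiableOn ℂ (mob a) (ball (0:ℂ) 1) := by
  intro w hw
  have hw' : ‖w‖ < 1 := by simpa [mem_ball, dist_eq, Complex.dist_eq] using hw
  have hd := mob_denom_ne a w ha hw'
  exact DifferentiableAt.differentiableWithinAt <| DifferentiableAt.div
    (by fun_prop) (by fun_prop) hd

lemma mem_ball_iff_abs (w : ℂ) : w ∈ ball (0:ℂ) 1 ↔ ‖w‖ < 1 := by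
  simp [mem_ball, Complex.dist_eq]

/-- Schwarz–Pick: pseudo-hyperbolic contraction. -/
lemma schwarz_pick (f : ℂ → ℂ) (hf : DifferentiableOn ℂ f (ball (0:ℂ) 1))
    (hmaps : MapsTo f (ball (0:ℂ) 1) (ball (0:ℂ) 1))
    {u v : ℂ} (hu : u ∈ ball (0:ℂ) 1) (hv : v ∈ ball (0:ℂ) 1) :
    ‖mob (f v) (f u)‖ ≤ ‖mob v u‖ := by
  have hu' : ‖u‖ < 1 := (mem_ball_iff_abs u).1 hu
  have hv' : ‖v‖ < 1 := (mem_ball_iff_abs v).1 hv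
  have hfv : ‖f v‖ < 1 := (mem_ball_iff_abs _).1 (hmaps hv)
  set g : ℂ → ℂ := fun z => mob (f v) (f (mob (-v) z)) with hg
  have hmv : ‖-v‖ < 1 := by simpa using hv'
  have hmob_maps : MapsTo (mob (-v)) (ball (0:ℂ) 1) (ball (0:ℂ) 1) := by
    intro z hz
    exact (mem_ball_iff_abs _).2 (mob_mem _ _ hmv ((mem_ball_iff_abs z).1 hz))
  have hfmob_maps : MapsTo (fun z => f (mob (-v) z)) (ball (0:ℂ) 1) (ball (0:ℂ) 1) :=
    fun z hz => hmaps (hmob_maps hz)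
  have hgd : DifferentiableOn ℂ g (ball (0:ℂ) 1) := by
    apply DifferentiableOn.comp (mob_differentiableOn (f v) hfv)
      (DifferentiableOn.comp hf (mob_differentiableOn (-v) hmv) hmob_maps) hfmob_maps
  have hgmaps : MapsTo g (ball (0:ℂ) 1) (ball (0:ℂ) 1) := by
    intro z hz
    exact (mem_ball_iff_abs _).2 (mob_mem _ _ hfv ((mem_ball_iff_abs _).1 (hfmob_maps hz)))
  have hg0 : g 0 = 0 := by
    have : mob (-v) 0 = v := by
      simp [mob]
    rw [hg]; simp only [this, mob_self]
  have hz : ‖mob v u‖ < 1 := mob_mem v u hv' hu'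
  have := Complex.norm_le_norm_of_mapsTo_ball hgd (hgmaps.mono_right ball_subset_closedBall) hg0 hz
  have hgval : g (mob v u) = mob (f v) (f u) := by
    rw [hg]; simp only [mob_inv v u hv' hu']
  rwa [hgval] at this

lemma sh_eq_mob (u v : ℂ) (hu : ‖u‖ < 1) (hv : ‖v‖ < 1) :
    sh u v = ‖mob v u‖ / Real.sqrt (1 - ‖mob v u‖ ^ 2) := by
  set D := ‖1 - (starRingEnd ℂ) v * u‖ with hD
  have hDpos : 0 < D := norm_pos_iff.mpr (mob_denom_ne v u hv hu)
  have habs : ‖u - v‖ = ‖mob v u‖ * D := by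
    rw [mob, norm_div, div_mul_cancel₀]
    exact hDpos.ne'
  have hid : D ^ 2 - ‖u - v‖ ^ 2
      = (1 - ‖v‖ ^ 2) * (1 - ‖u‖ ^ 2) := by
    have h := normSq_identity v u
    simp only [← Complex.sq_norm] at h
    rw [← hD] at h
    exact h
  have h1 : ‖mob v u‖ ^ 2 = ‖u - v‖ ^ 2 / D ^ 2 := by
    rw [mob, norm_div, div_pow, hD]
  have hprod : (1 - ‖u‖ ^ 2) * (1 - ‖v‖ ^ 2)
      = D ^ 2 * (1 - ‖mob v u‖ ^ 2) := by
    rw [h1]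
    have hD2 : (D:ℝ) ^ 2 ≠ 0 := by positivity
    field_simp
    nlinarith [hid]
  rw [sh, hprod, habs, Real.sqrt_mul (by positivity), Real.sqrt_sq hDpos.le,
    mul_comm (‖mob v u‖) D, mul_div_mul_left _ _ hDpos.ne']

lemma ratio_mono {x y : ℝ} (hx : 0 ≤ x) (hxy : x ≤ y) (hy : y < 1) :
    x / Real.sqrt (1 - x ^ 2) ≤ y / Real.sqrt (1 - y ^ 2) := by
  have h1 : 0 < 1 - y ^ 2 := by nlinarith
  exact div_le_div₀ (hx.trans hxy) hxy (Real.sqrt_pos.2 h1)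
    (Real.sqrt_le_sqrt (by nlinarith))

lemma arsinh_mul_le {c x : ℝ} (hc : 1 ≤ c) (hx : 0 ≤ x) :
    Real.arsinh (c * x) ≤ c * Real.arsinh x := by
  set φ : ℝ → ℝ := fun t => c * Real.arsinh t - Real.arsinh (c * t) with hφ
  have hd : ∀ t : ℝ, HasDerivAt φ
      (c * (Real.sqrt (1 + t ^ 2))⁻¹ - (Real.sqrt (1 + (c * t) ^ 2))⁻¹ * c) t := by
    intro t
    have h1 := (Real.hasDerivAt_arsinh t).const_mul c
    have h2 : HasDerivAt (fun t => Real.arsinh (c * t))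
        ((Real.sqrt (1 + (c * t) ^ 2))⁻¹ * c) t := by
      have := (Real.hasDerivAt_arsinh (c * t)).comp t ((hasDerivAt_id t).const_mul c)
      exact this.congr_deriv (by ring)
    exact h1.sub h2
  have hmono : MonotoneOn φ (Set.Ici 0) := by
    apply monotoneOn_of_deriv_nonneg (convex_Ici 0)
    · exact Continuous.continuousOn (by
        exact (continuous_const.mul Real.continuous_arsinh).sub
          (Real.continuous_arsinh.comp (continuous_const.mul continuous_id)))
    · intro t _
      exact (hd t).differentiableAt.differentiableWithinAt
    · intro t ht
      rw [(hd t).deriv]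
      have h1 : Real.sqrt (1 + t ^ 2) ≤ Real.sqrt (1 + (c * t) ^ 2) := by
        apply Real.sqrt_le_sqrt
        nlinarith [mul_nonneg (mul_nonneg (sub_nonneg.2 hc)
          (by linarith : (0:ℝ) ≤ c + 1)) (sq_nonneg t)]
      have h2 : (0:ℝ) < Real.sqrt (1 + t ^ 2) := by positivity
      have h3 : (Real.sqrt (1 + (c * t) ^ 2))⁻¹ ≤ (Real.sqrt (1 + t ^ 2))⁻¹ :=
        inv_anti₀ h2 h1
      nlinarith
  have h0 : φ 0 = 0 := by simp [hφ]
  have := hmono (Set.self_mem_Ici) (Set.mem_Ici.2 hx) hx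
  rw [h0] at this
  simp only [hφ] at this
  linarith

lemma one_add_sq_le_exp {s : ℝ} (hs : 0 ≤ s) :
    1 + 2 * s ^ 2 ≤ Real.exp (2 * Real.arsinh s) := by
  have h1 : Real.exp (2 * Real.arsinh s) = (s + Real.sqrt (1 + s ^ 2)) ^ 2 := by
    rw [two_mul, Real.exp_add, Real.exp_arsinh]; ring
  rw [h1]
  have h3 : Real.sqrt (1 + s ^ 2) ^ 2 = 1 + s ^ 2 := Real.sq_sqrt (by positivity)
  nlinarith [Real.sqrt_nonneg (1 + s ^ 2), h3, mul_nonneg hs (Real.sqrt_nonneg (1 + s ^ 2))]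

section Auto
variable (α β : ℂ)

/-- numerator of `w - h w` -/
noncomputable def Qp (w : ℂ) : ℂ :=
  (starRingEnd ℂ) β * w ^ 2 - (α - (starRingEnd ℂ) α) * w - β

/-- axis defect function -/
noncomputable def Ee (w : ℂ) : ℝ :=
  2 * ((starRingEnd ℂ) β * w).im - α.im * (1 + normSq w)

/-- half-displacement quotient -/
noncomputable def Ff (w : ℂ) : ℝ := ‖Qp α β w‖ / (1 - ‖w‖ ^ 2)

/-- pairing -/
noncomputable def Tt (w z : ℂ) : ℂ :=
  -(α.im : ℂ) * ((starRingEnd ℂ) z * w + 1)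
    + Complex.I * (β * (starRingEnd ℂ) z - (starRingEnd ℂ) β * w)

lemma normSq_Qp (w : ℂ) :
    normSq (Qp α β w) = Ee α β w ^ 2 + (normSq β - α.im ^ 2) * (1 - normSq w) ^ 2 := by
  simp [Qp, Ee, normSq_apply, mul_re, mul_im, sub_re, sub_im, pow_two]
  ring

lemma normSq_Tt (w z : ℂ) :
    normSq (Tt α β w z) = (normSq β - α.im ^ 2) * normSq (w - z) + Ee α β w * Ee α β z := by
  simp [Tt, Ee, normSq_apply, mul_re, mul_im, sub_re, sub_im, add_re, add_im, pow_two]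
  ring

lemma re_Tt (w z : ℂ) :
    2 * ((Tt α β w z) * (1 - (starRingEnd ℂ) w * z)).re
      = (1 - normSq z) * Ee α β w + (1 - normSq w) * Ee α β z := by
  simp [Tt, Ee, normSq_apply, mul_re, mul_im, sub_re, sub_im, add_re, add_im, pow_two]
  ring

variable (hn : normSq α = 1 + normSq β)

lemma den_identity (w : ℂ) :
    normSq ((starRingEnd ℂ) β * w + (starRingEnd ℂ) α) - normSq (α * w + β)
      = (normSq α - normSq β) * (1 - normSq w) := by
  simp [normSq_apply, mul_re, mul_im, add_re, add_im]
  ring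

include hn

lemma den_ne (w : ℂ) (hw : ‖w‖ < 1) :
    (starRingEnd ℂ) β * w + (starRingEnd ℂ) α ≠ 0 := by
  intro hcon
  have h0 : normSq ((starRingEnd ℂ) β * w + (starRingEnd ℂ) α) = 0 := by rw [hcon]; simp
  have h1 := den_identity α β w
  have h2 : normSq w < 1 := by
    have := Complex.sq_norm w; nlinarith [norm_nonneg w]
  nlinarith [normSq_nonneg (α * w + β), normSq_nonneg β]

lemma H_mem (w : ℂ) (hw : ‖w‖ < 1) :
    ‖(α * w + β) / ((starRingEnd ℂ) β * w + (starRingEnd ℂ) α)‖ < 1 := by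
  rw [norm_div, div_lt_one (norm_pos_iff.mpr (den_ne α β hn w hw))]
  have h1 := den_identity α β w
  have h2 : normSq w < 1 := by
    have := Complex.sq_norm w; nlinarith [norm_nonneg w]
  have : normSq (α * w + β) < normSq ((starRingEnd ℂ) β * w + (starRingEnd ℂ) α) := by
    nlinarith
  have := Real.sqrt_lt_sqrt (normSq_nonneg _) this
  simpa [Complex.norm_def] using this

lemma sub_H (w : ℂ) (hw : ‖w‖ < 1) :
    w - (α * w + β) / ((starRingEnd ℂ) β * w + (starRingEnd ℂ) α)
      = Qp α β w / ((starRingEnd ℂ) β * w + (starRingEnd ℂ) α) := by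
  have hd := den_ne α β hn w hw
  rw [eq_div_iff hd, sub_mul, div_mul_cancel₀ _ hd]; simp only [Qp]; ring

lemma one_sub_sq_H (w : ℂ) (hw : ‖w‖ < 1) :
    1 - ‖(α * w + β) / ((starRingEnd ℂ) β * w + (starRingEnd ℂ) α)‖ ^ 2
      = (1 - ‖w‖ ^ 2)
        / ‖(starRingEnd ℂ) β * w + (starRingEnd ℂ) α‖ ^ 2 := by
  have hd := den_ne α β hn w hw
  have hdpos : (0:ℝ) < ‖(starRingEnd ℂ) β * w + (starRingEnd ℂ) α‖ :=
    norm_pos_iff.mpr hd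
  rw [norm_div, div_pow]
  have h1 := den_identity α β w
  rw [Complex.sq_norm, Complex.sq_norm, Complex.sq_norm]
  have h2 : normSq ((starRingEnd ℂ) β * w + (starRingEnd ℂ) α) ≠ 0 := by
    intro hcon; exact hd (normSq_eq_zero.1 hcon)
  have h3 : normSq α - normSq β = 1 := by linarith
  rw [h3, one_mul] at h1
  rw [eq_div_iff h2, sub_mul, div_mul_cancel₀ _ h2]
  linarith

/-- the central formula: `sinh(ρ(w, h w)/2) = |Q(w)|/(1-|w|²)` -/
lemma sh_H (w : ℂ) (hw : ‖w‖ < 1) :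
    sh w ((α * w + β) / ((starRingEnd ℂ) β * w + (starRingEnd ℂ) α)) = Ff α β w := by
  have hd := den_ne α β hn w hw
  have hdpos : (0:ℝ) < ‖(starRingEnd ℂ) β * w + (starRingEnd ℂ) α‖ :=
    norm_pos_iff.mpr hd
  have hm : ‖w‖ ^ 2 < 1 := by
    nlinarith [norm_nonneg w]
  rw [sh, sub_H α β hn w hw, one_sub_sq_H α β hn w hw, norm_div]
  rw [show (1 - ‖w‖ ^ 2) * ((1 - ‖w‖ ^ 2)
      / ‖(starRingEnd ℂ) β * w + (starRingEnd ℂ) α‖ ^ 2)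
    = ((1 - ‖w‖ ^ 2)
      / ‖(starRingEnd ℂ) β * w + (starRingEnd ℂ) α‖) ^ 2 by
      rw [div_pow]; ring]
  rw [Real.sqrt_sq (div_nonneg (by nlinarith) hdpos.le)]
  rw [Ff, div_div_div_cancel_right₀]
  exact hdpos.ne'

end Auto


lemma key_ineq (α β w z : ℂ) (hk2 : 0 ≤ normSq β - α.im ^ 2)
    (hz1 : normSq z ≤ 1) (hEz : Ee α β z = 0) :
    (1 - normSq z) * |Ee α β w| ≤ 2 * Real.sqrt (normSq β - α.im ^ 2)
      * (‖w - z‖ * ‖1 - (starRingEnd ℂ) w * z‖) := by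
  have hre := re_Tt α β w z
  rw [hEz, mul_zero, add_zero] at hre
  have hT : ‖Tt α β w z‖
      = Real.sqrt (normSq β - α.im ^ 2) * ‖w - z‖ := by
    rw [Complex.norm_def, normSq_Tt, hEz, mul_zero, add_zero,
      Real.sqrt_mul hk2, Complex.norm_def]
  have habs : |((Tt α β w z) * (1 - (starRingEnd ℂ) w * z)).re|
      ≤ ‖Tt α β w z‖ * ‖1 - (starRingEnd ℂ) w * z‖ := by
    rw [← norm_mul]; exact Complex.abs_re_le_norm _
  rw [hT] at habs
  calc (1 - normSq z) * |Ee α β w| = |(1 - normSq z) * Ee α β w| := by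
        rw [abs_mul, _root_.abs_of_nonneg (by linarith : (0:ℝ) ≤ 1 - normSq z)]
  _ = 2 * |((Tt α β w z) * (1 - (starRingEnd ℂ) w * z)).re| := by
        rw [← hre, abs_mul]; norm_num
  _ ≤ 2 * (Real.sqrt (normSq β - α.im ^ 2) * ‖w - z‖
        * ‖1 - (starRingEnd ℂ) w * z‖) := by linarith
  _ = 2 * Real.sqrt (normSq β - α.im ^ 2)
        * (‖w - z‖ * ‖1 - (starRingEnd ℂ) w * z‖) := by ring

lemma F_le (α β w z : ℂ) (hk2 : 0 ≤ normSq β - α.im ^ 2)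
    (hw : ‖w‖ < 1) (hz : ‖z‖ < 1) (hEz : Ee α β z = 0) :
    Ff α β w ≤ Real.sqrt (normSq β - α.im ^ 2) * (1 + 2 * sh w z ^ 2) := by
  have hkk : Real.sqrt (normSq β - α.im ^ 2) ^ 2 = normSq β - α.im ^ 2 := Real.sq_sqrt hk2
  set k := Real.sqrt (normSq β - α.im ^ 2) with hk
  have hknn : 0 ≤ k := Real.sqrt_nonneg _
  have hm : ‖w‖ ^ 2 < 1 := by nlinarith [norm_nonneg w]
  have hn : ‖z‖ ^ 2 < 1 := by nlinarith [norm_nonneg z]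
  have hP : (0:ℝ) < (1 - ‖w‖ ^ 2) * (1 - ‖z‖ ^ 2) := by nlinarith
  have hs2 : sh w z ^ 2 = ‖w - z‖ ^ 2
      / ((1 - ‖w‖ ^ 2) * (1 - ‖z‖ ^ 2)) := by
    rw [sh, div_pow, Real.sq_sqrt hP.le]
  have hcross : ‖1 - (starRingEnd ℂ) w * z‖ ^ 2
      = (1 - ‖w‖ ^ 2) * (1 - ‖z‖ ^ 2) + ‖w - z‖ ^ 2 := by
    have h := normSq_identity w z
    simp only [← Complex.sq_norm] at h
    rw [show ‖z - w‖ = ‖w - z‖ by exact norm_sub_rev z w] at h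
    linarith
  have hkey := key_ineq α β w z hk2 (by rw [← Complex.sq_norm]; linarith) hEz
  rw [← Complex.sq_norm z, ← hk] at hkey
  have h1 : (0:ℝ) ≤ (1 - ‖z‖ ^ 2) * |Ee α β w| :=
    mul_nonneg (by linarith) (abs_nonneg _)
  have h2 := mul_self_le_mul_self h1 hkey
  have h3 : ((1 - ‖z‖ ^ 2) * |Ee α β w|) * ((1 - ‖z‖ ^ 2) * |Ee α β w|)
      = (1 - ‖z‖ ^ 2) ^ 2 * Ee α β w ^ 2 := by
    rw [mul_mul_mul_comm, ← sq, ← sq, _root_.sq_abs]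
  have hE2 : (1 - ‖z‖ ^ 2) ^ 2 * Ee α β w ^ 2
      ≤ 4 * k ^ 2 * (‖w - z‖ ^ 2 * ‖1 - (starRingEnd ℂ) w * z‖ ^ 2) := by
    rw [← h3]
    calc _ ≤ _ := h2
    _ = 4 * k ^ 2 * (‖w - z‖ ^ 2
        * ‖1 - (starRingEnd ℂ) w * z‖ ^ 2) := by ring
  have hQ : ‖Qp α β w‖ ^ 2
      = Ee α β w ^ 2 + k ^ 2 * (1 - ‖w‖ ^ 2) ^ 2 := by
    rw [Complex.sq_norm, normSq_Qp, hkk, ← Complex.sq_norm w]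
  have hgoal2 : ‖Qp α β w‖ ^ 2
      ≤ (k * (1 + 2 * sh w z ^ 2) * (1 - ‖w‖ ^ 2)) ^ 2 := by
    rw [hQ, hs2]
    set m := ‖w‖ ^ 2
    set n := ‖z‖ ^ 2
    set A := ‖w - z‖ ^ 2 with hA
    have hAnn : 0 ≤ A := sq_nonneg _
    have h1n : (0:ℝ) < 1 - n := by linarith
    have h1m : (0:ℝ) < 1 - m := by linarith
    rw [hcross] at hE2
    have hE3 : Ee α β w ^ 2 ≤ 4 * k ^ 2 * (A * ((1 - m) * (1 - n) + A)) / (1 - n) ^ 2 := by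
      rw [le_div_iff₀ (by positivity)]
      nlinarith [hE2]
    have expand : (k * (1 + 2 * (A / ((1 - m) * (1 - n)))) * (1 - m)) ^ 2
        = k ^ 2 * (1 - m) ^ 2 + 4 * k ^ 2 * (A * ((1 - m) * (1 - n) + A)) / (1 - n) ^ 2 := by
      field_simp
      ring
    rw [expand]
    linarith
  have hrhs_nn : 0 ≤ k * (1 + 2 * sh w z ^ 2) * (1 - ‖w‖ ^ 2) :=
    mul_nonneg (mul_nonneg hknn (by nlinarith [sq_nonneg (sh w z)])) (by linarith)
  have habsle : ‖Qp α β w‖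
      ≤ k * (1 + 2 * sh w z ^ 2) * (1 - ‖w‖ ^ 2) := by
    have h5 : ‖Qp α β w‖ = Real.sqrt (‖Qp α β w‖ ^ 2) :=
      (Real.sqrt_sq (norm_nonneg _)).symm
    rw [h5]
    calc Real.sqrt (‖Qp α β w‖ ^ 2)
        ≤ Real.sqrt ((k * (1 + 2 * sh w z ^ 2) * (1 - ‖w‖ ^ 2)) ^ 2) :=
          Real.sqrt_le_sqrt hgoal2
    _ = k * (1 + 2 * sh w z ^ 2) * (1 - ‖w‖ ^ 2) := Real.sqrt_sq hrhs_nn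
  rw [Ff, div_le_iff₀ (by linarith)]
  linarith [habsle]

lemma k2_pos (α β : ℂ) (hn : normSq α = 1 + normSq β) (htr : 1 < |α.re|) :
    0 < normSq β - α.im ^ 2 := by
  have h1 : normSq α = α.re ^ 2 + α.im ^ 2 := by rw [normSq_apply]; ring
  have h2 : 1 < α.re ^ 2 := by nlinarith [_root_.sq_abs α.re, abs_nonneg α.re]
  nlinarith

lemma exists_v0 (α β : ℂ) (hn : normSq α = 1 + normSq β) (htr : 1 < |α.re|) :
    ∃ v : ℂ, ‖v‖ < 1 ∧ Ee α β v = 0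
      ∧ Ff α β v = Real.sqrt (normSq β - α.im ^ 2) := by
  have hk2 := k2_pos α β hn htr
  set k := Real.sqrt (normSq β - α.im ^ 2) with hk
  have hkk : k ^ 2 = normSq β - α.im ^ 2 := Real.sq_sqrt hk2.le
  have hkpos : 0 < k := Real.sqrt_pos.2 hk2
  by_cases ha : α.im = 0
  · refine ⟨0, by simp, ?_, ?_⟩
    · simp [Ee, ha]
    · have hQ0 : Qp α β 0 = -β := by simp [Qp]
      rw [Ff, hQ0, norm_neg, hk, ha]
      have h0 : ‖(0:ℂ)‖ = 0 := by simp
      rw [h0]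
      norm_num
      rw [← Complex.sq_norm, Real.sqrt_sq (norm_nonneg β)]
  · set B' := ‖β‖ with hB
    have hB2 : B' ^ 2 = normSq β := Complex.sq_norm β
    have hBk : k < B' := by
      have h0 : 0 < α.im ^ 2 := by nlinarith [abs_pos.2 ha, _root_.sq_abs α.im]
      have h1 : k ^ 2 < B' ^ 2 := by rw [hkk, hB2]; linarith
      nlinarith [norm_nonneg β, hkpos]
    have hBpos : 0 < B' := lt_trans hkpos hBk
    have hbne : β ≠ 0 := by
      intro hcon; rw [hcon] at hB; simp at hB; rw [hB] at hBpos; exact lt_irrefl 0 hBpos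
    set t := (B' - k) / α.im with ht
    have hat : α.im * t = B' - k := by rw [ht]; field_simp
    have ha2 : α.im ^ 2 = B' ^ 2 - k ^ 2 := by rw [hkk, hB2]; ring
    set v := Complex.I * ((t / B' : ℝ) : ℂ) * β with hv
    have hnsv : normSq v = t ^ 2 := by
      rw [hv, normSq_mul, normSq_mul, normSq_I, one_mul, normSq_ofReal, ← hB2]
      field_simp
    have habsv : ‖v‖ ^ 2 = t ^ 2 := by rw [Complex.sq_norm, hnsv]
    have ht2 : t ^ 2 < 1 := by
      have h1 : (B' - k) ^ 2 < α.im ^ 2 := by nlinarith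
      have h2 : t ^ 2 = (B' - k) ^ 2 / α.im ^ 2 := by rw [ht]; field_simp
      rw [h2, div_lt_one (by positivity)]
      exact h1
    have habs1 : ‖v‖ < 1 := by nlinarith [norm_nonneg v]
    have hIm : ((starRingEnd ℂ) β * v).im = t * B' := by
      rw [hv]
      have : (starRingEnd ℂ) β * (Complex.I * ((t / B' : ℝ) : ℂ) * β)
          = Complex.I * ((t / B' : ℝ) : ℂ) * ((starRingEnd ℂ) β * β) := by ring
      rw [this, mul_comm ((starRingEnd ℂ) β) β, Complex.mul_conj]
      simp [Complex.mul_im, Complex.mul_re]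
      rw [← hB2]
      field_simp
    have hEv : Ee α β v = 0 := by
      rw [Ee, hIm, hnsv]
      have expand : α.im * (2 * (t * B') - α.im * (1 + t ^ 2))
          = 2 * B' * (α.im * t) - α.im ^ 2 - (α.im * t) ^ 2 := by ring
      rw [hat] at expand
      have hz : α.im * (2 * (t * B') - α.im * (1 + t ^ 2)) = 0 := by
        rw [expand, ha2]; ring
      rcases mul_eq_zero.1 hz with h | h
      · exact absurd h ha
      · exact h
    refine ⟨v, habs1, hEv, ?_⟩
    have hQv : normSq (Qp α β v) = (k * (1 - t ^ 2)) ^ 2 := by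
      rw [normSq_Qp, hEv, hnsv, ← hkk]; ring
    have habsQ : ‖Qp α β v‖ = k * (1 - t ^ 2) := by
      rw [Complex.norm_def, hQv, Real.sqrt_sq (by nlinarith)]
    rw [Ff, habsQ, habsv, mul_div_assoc, div_self (by nlinarith : (1:ℝ) - t ^ 2 ≠ 0), mul_one]


end DispAux
open DispAux

/-- Let `f` be a holomorphic self-map of the disc and `b` a point of the disc.
Let `h` be the conformal automorphism of the disc defined as follows: if
`f(b) ≠ b`, then `h` is the hyperbolic automorphism (written in the form
`w ↦ (αw + β)/(β̄w + ᾱ)`, `|α|² − |β|² = 1`, with trace condition `|Re α| > 1`)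
whose axis is the hyperbolic line through `b` and `f(b)` — membership of `b`
and `f(b)` in the axis being expressed by the fact that they minimize the
displacement `w ↦ ρ(w,h(w))`, which characterizes the axis of a hyperbolic
automorphism — and which satisfies `h(f(b)) = b`; if `f(b) = b`, then `h` is
the identity on the disc.  Then `ρ(f(u), h(f(u))) ≤ exp(ρ(u,b))·ρ(f(b),b)` for
all `u` in the disc. -/
theorem displacement_correction_automorphism (f h : ℂ → ℂ)
    (hf : DifferentiableOn ℂ f (ball (0:ℂ) 1))
    (hmaps : MapsTo f (ball (0:ℂ) 1) (ball (0:ℂ) 1))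
    (b : ℂ) (hb : b ∈ ball (0:ℂ) 1)
    (hcase_fix : f b = b → ∀ w ∈ ball (0:ℂ) 1, h w = w)
    (hcase_move : f b ≠ b → ∃ α β : ℂ,
      (∀ w ∈ ball (0:ℂ) 1,
        h w = (α * w + β) / ((starRingEnd ℂ) β * w + (starRingEnd ℂ) α)) ∧
      ‖α‖ ^ 2 - ‖β‖ ^ 2 = 1 ∧
      1 < |α.re| ∧
      (∀ w ∈ ball (0:ℂ) 1, rho b (h b) ≤ rho w (h w)) ∧
      (∀ w ∈ ball (0:ℂ) 1, rho (f b) (h (f b)) ≤ rho w (h w)) ∧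
      h (f b) = b) :
    ∀ u ∈ ball (0:ℂ) 1,
      rho (f u) (h (f u)) ≤ Real.exp (rho u b) * rho (f b) b := by
  intro u hu
  have hu' : ‖u‖ < 1 := (mem_ball_iff_abs u).1 hu
  have hb' : ‖b‖ < 1 := (mem_ball_iff_abs b).1 hb
  have hfu : f u ∈ ball (0:ℂ) 1 := hmaps hu
  have hfb : f b ∈ ball (0:ℂ) 1 := hmaps hb
  have hfu' : ‖f u‖ < 1 := (mem_ball_iff_abs _).1 hfu
  have hfb' : ‖f b‖ < 1 := (mem_ball_iff_abs _).1 hfb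
  by_cases hcase : f b = b
  · have h1 := hcase_fix hcase (f u) hfu
    rw [h1, hcase]
    have e1 : rho (f u) (f u) = 0 := by simp [rho]
    have e2 : rho b b = 0 := by simp [rho]
    rw [e1, e2, mul_zero]
  · obtain ⟨α, β, hform, hconst, htr, hminb, hminfb, hfix⟩ := hcase_move hcase
    have hn : normSq α = 1 + normSq β := by
      have h1 := Complex.sq_norm α; have h2 := Complex.sq_norm β; nlinarith [hconst]
    have hk2 := k2_pos α β hn htr
    have hkk : Real.sqrt (normSq β - α.im ^ 2) ^ 2 = normSq β - α.im ^ 2 :=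
      Real.sq_sqrt hk2.le
    set k := Real.sqrt (normSq β - α.im ^ 2) with hk
    have hkpos : 0 < k := Real.sqrt_pos.2 hk2
    obtain ⟨v, hv1, hv2, hv3⟩ := exists_v0 α β hn htr
    rw [← hk] at hv3
    have hvball : v ∈ ball (0:ℂ) 1 := (mem_ball_iff_abs v).2 hv1
    have hmin := hminfb v hvball
    have hshv : sh v (h v) = Ff α β v := by
      rw [hform v hvball]; exact sh_H α β hn v hv1
    have hshfb : sh (f b) (h (f b)) = Ff α β (f b) := by
      rw [hform (f b) hfb]; exact sh_H α β hn (f b) hfb'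
    have hFfb_le : Ff α β (f b) ≤ k := by
      rw [rho_eq, rho_eq, hshv, hshfb, hv3] at hmin
      have h2 : Real.arsinh (Ff α β (f b)) ≤ Real.arsinh k := by linarith
      exact Real.arsinh_le_arsinh.1 h2
    have hnfb : normSq (f b) < 1 := by
      rw [← Complex.sq_norm]; nlinarith [norm_nonneg (f b)]
    have h1mfb : (0:ℝ) < 1 - ‖f b‖ ^ 2 := by
      nlinarith [norm_nonneg (f b)]
    have hEfb : Ee α β (f b) = 0 := by
      have hQ := normSq_Qp α β (f b)
      have habs : ‖Qp α β (f b)‖ ≤ k * (1 - ‖f b‖ ^ 2) := by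
        rw [Ff, div_le_iff₀ h1mfb] at hFfb_le
        linarith
      have hsq : normSq (Qp α β (f b)) ≤ k ^ 2 * (1 - ‖f b‖ ^ 2) ^ 2 := by
        rw [← Complex.sq_norm]
        nlinarith [norm_nonneg (Qp α β (f b)), habs,
          mul_nonneg hkpos.le h1mfb.le]
      rw [hQ, Complex.sq_norm (f b), ← hkk] at hsq
      have hE2 : Ee α β (f b) ^ 2 ≤ 0 := by linarith
      have := le_antisymm hE2 (sq_nonneg _)
      exact pow_eq_zero_iff (by norm_num : 2 ≠ 0) |>.1 this
    have hFw := F_le α β (f u) (f b) hk2.le hfu' hfb' hEfb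
    rw [← hk] at hFw
    have hsp : ‖mob (f b) (f u)‖ ≤ ‖mob b u‖ :=
      schwarz_pick f hf hmaps hu hb
    have hshc : sh (f u) (f b) ≤ sh u b := by
      rw [sh_eq_mob (f u) (f b) hfu' hfb', sh_eq_mob u b hu' hb']
      exact ratio_mono (norm_nonneg _) hsp (mob_mem b u hb' hu')
    set s := sh u b with hs
    have hs0 : 0 ≤ s := sh_nonneg u b
    have hsh0 : 0 ≤ sh (f u) (f b) := sh_nonneg _ _
    have hx2 : sh (f u) (f b) ^ 2 ≤ s ^ 2 := pow_le_pow_left₀ hsh0 hshc 2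
    have hC : Ff α β (f u) ≤ k * (1 + 2 * s ^ 2) := by
      refine hFw.trans (mul_le_mul_of_nonneg_left (by linarith) hkpos.le)
    have hFfb_eq : Ff α β (f b) = k := by
      have hQfb : normSq (Qp α β (f b)) = (k * (1 - normSq (f b))) ^ 2 := by
        rw [normSq_Qp, hEfb, ← hkk]; ring
      have habsQ : ‖Qp α β (f b)‖ = k * (1 - normSq (f b)) := by
        rw [Complex.norm_def, hQfb,
          Real.sqrt_sq (mul_nonneg hkpos.le (by linarith : (0:ℝ) ≤ 1 - normSq (f b)))]
      rw [Ff, habsQ, Complex.sq_norm, mul_div_assoc,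
        div_self (ne_of_gt (by linarith : (0:ℝ) < 1 - normSq (f b))), mul_one]
    have hshzb : sh (f b) b = k := by
      have h2 := hshfb
      rw [hfix] at h2
      rw [h2, hFfb_eq]
    have hrfb : rho (f b) b = 2 * Real.arsinh k := by rw [rho_eq, hshzb]
    have hrfb0 : 0 ≤ rho (f b) b := rho_nonneg _ _
    have hrw : rho (f u) (h (f u)) = 2 * Real.arsinh (Ff α β (f u)) := by
      rw [rho_eq, hform (f u) hfu, sh_H α β hn (f u) hfu']
    rw [hrw]
    have hC1 : (1:ℝ) ≤ 1 + 2 * s ^ 2 := by linarith [sq_nonneg s]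
    calc 2 * Real.arsinh (Ff α β (f u))
        ≤ 2 * Real.arsinh ((1 + 2 * s ^ 2) * k) := by
          have h9 : Ff α β (f u) ≤ (1 + 2 * s ^ 2) * k := by
            rw [mul_comm]; exact hC
          have := Real.arsinh_le_arsinh.2 h9
          linarith
    _ ≤ 2 * ((1 + 2 * s ^ 2) * Real.arsinh k) := by
          have := arsinh_mul_le hC1 hkpos.le
          linarith
    _ = (1 + 2 * s ^ 2) * rho (f b) b := by rw [hrfb]; ring
    _ ≤ Real.exp (rho u b) * rho (f b) b := by
          apply mul_le_mul_of_nonneg_right _ hrfb0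
          rw [rho_eq]
          exact one_add_sq_le_exp hs0
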